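/- Let φ, φ̃ : M → N be two smooth maps expressed in the same local charts, with corresponding local variables v₀ = du₀ and ṽ₀ = dũ₀. Then on any open set D whose closure is compact and contained in the chart domain, there exists a constant C > 0 such that |Δ(dφ − dφ̃)| ≤ C( |φ − φ̃| + |dφ − dφ̃| + |∇dφ − ∇dφ̃| + |v₀ − ṽ₀| ), where dφ = (φ_i^α) denotes the collection of first partial derivatives, ∇dφ the second fundamental form, and Δ acts componentwise on the ℝ^{mn}-valued function (φ_i^α). -/

import Mathlib

noncomputable section

open scoped BigOperators

namespace Polyharm

/-- Partial derivative of a scalar function on `ℝ^d` in the `i`-th coordinate direction. -/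
def pd {d : ℕ} (i : Fin d) (f : (Fin d → ℝ) → ℝ) (x : Fin d → ℝ) : ℝ :=
  fderiv ℝ f x (Pi.single i 1)

/-- Euclidean norm of a finite family of real numbers. -/
def vnorm {ι : Type} [Fintype ι] (f : ι → ℝ) : ℝ :=
  Real.sqrt (∑ i, f i ^ 2)

/-- Local-coordinate data for maps between Riemannian manifolds: the inverse metric
`g^{ij}` and the Christoffel symbols `Γ^k_{ij}` of a chart of the domain `(M,g)`, and
the Christoffel symbols `Γ^α_{βγ}` of a chart of the target `(N,h)`. -/
structure ChartData (m n : ℕ) where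
  ginv : (Fin m → ℝ) → Fin m → Fin m → ℝ
  ΓM : (Fin m → ℝ) → Fin m → Fin m → Fin m → ℝ
  ΓN : (Fin n → ℝ) → Fin n → Fin n → Fin n → ℝ

variable {m n : ℕ}

/-- Smoothness of the domain data. -/
def ChartData.SmoothDomain (P : ChartData m n) : Prop :=
  (∀ i j, ContDiff ℝ (⊤ : ℕ∞) fun x => P.ginv x i j) ∧
  (∀ k i j, ContDiff ℝ (⊤ : ℕ∞) fun x => P.ΓM x k i j)

/-- Smoothness of the target Christoffel symbols. -/
def ChartData.SmoothTarget (P : ChartData m n) : Prop :=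
  ∀ α β γ, ContDiff ℝ (⊤ : ℕ∞) fun y => P.ΓN y α β γ

/-- The chart data comes from Riemannian metrics: `g^{ij}` is symmetric and positive
definite, and the Christoffel symbols are symmetric in their lower indices. -/
def ChartData.Riemannian (P : ChartData m n) : Prop :=
  (∀ x i j, P.ginv x i j = P.ginv x j i) ∧
  (∀ x (v : Fin m → ℝ), v ≠ 0 → 0 < ∑ i, ∑ j, P.ginv x i j * v i * v j) ∧
  (∀ x k i j, P.ΓM x k i j = P.ΓM x k j i) ∧
  (∀ y α β γ, P.ΓN y α β γ = P.ΓN y α γ β)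

/-- The Laplace–Beltrami operator on scalar functions:
`-Δ f = g^{ij} ∂²f/∂x^i∂x^j - g^{ij} Γ^k_{ij} ∂f/∂x^k`. -/
def lap (P : ChartData m n) (f : (Fin m → ℝ) → ℝ) (x : Fin m → ℝ) : ℝ :=
  -((∑ i, ∑ j, P.ginv x i j * pd i (fun z => pd j f z) x)
    - ∑ i, ∑ j, ∑ k, P.ginv x i j * P.ΓM x k i j * pd k f x)

/-- `φ_i^β = ∂φ^β/∂x^i`. -/
def dphi (φ : (Fin m → ℝ) → Fin n → ℝ) (x : Fin m → ℝ) (i : Fin m) (β : Fin n) : ℝ :=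
  pd i (fun z => φ z β) x

/-- `⟨dφ^β, dψ^γ⟩ = g^{ij} φ_i^β ψ_j^γ`. -/
def dpair (P : ChartData m n) (φ ψ : (Fin m → ℝ) → Fin n → ℝ) (x : Fin m → ℝ)
    (β γ : Fin n) : ℝ :=
  ∑ i, ∑ j, P.ginv x i j * dphi φ x i β * dphi ψ x j γ

/-- Components `R^α_{δβγ}` of the curvature tensor of the target, with the sign
convention `R(∂/∂y^β, ∂/∂y^γ)∂/∂y^δ = R^α_{δβγ} ∂/∂y^α` of the paper. -/
def Rc (P : ChartData m n) (y : Fin n → ℝ) (α δ β γ : Fin n) : ℝ :=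
  pd β (fun z => P.ΓN z α γ δ) y - pd γ (fun z => P.ΓN z α β δ) y
    + ∑ μ, (P.ΓN y α β μ * P.ΓN y μ γ δ - P.ΓN y α γ μ * P.ΓN y μ β δ)

/-- `2S^α_{βωϑ} = ∂Γ^α_{βϑ}/∂y^ω + Γ^γ_{βϑ}Γ^α_{ωγ} + ∂Γ^α_{ωϑ}/∂y^β + Γ^γ_{ωϑ}Γ^α_{βγ}`. -/
def Scoef (P : ChartData m n) (y : Fin n → ℝ) (α β ω ϑ : Fin n) : ℝ :=
  (pd ω (fun z => P.ΓN z α β ϑ) y + (∑ γ, P.ΓN y γ β ϑ * P.ΓN y α ω γ)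
    + pd β (fun z => P.ΓN z α ω ϑ) y + ∑ γ, P.ΓN y γ ω ϑ * P.ΓN y α β γ) / 2

/-- The operator
`A^α(η,ξ) = ξ_i^ϑ(-2 g^{ij} φ_j^β Γ^α_{βϑ}) + η^ϑ((Δφ^β)Γ^α_{βϑ} - g^{ij} φ_j^β φ_i^ω S^α_{βωϑ})`. -/
def Aop (P : ChartData m n) (φ : (Fin m → ℝ) → Fin n → ℝ) (η : Fin n → ℝ)
    (ξ : Fin m → Fin n → ℝ) (x : Fin m → ℝ) (α : Fin n) : ℝ :=
  (∑ ϑ, ∑ i, ξ i ϑ * (-2 * ∑ j, ∑ β, P.ginv x i j * dphi φ x j β * P.ΓN (φ x) α β ϑ))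
    + ∑ ϑ, η ϑ * ((∑ β, lap P (fun z => φ z β) x * P.ΓN (φ x) α β ϑ)
        - ∑ i, ∑ j, ∑ β, ∑ ω,
            P.ginv x i j * dphi φ x j β * dphi φ x i ω * Scoef P (φ x) α β ω ϑ)

/-- The operator `A` applied to (the components of) a section `σ` of `φ⁻¹TN`:
`A(σ, ∂σ)`. -/
def Asec (P : ChartData m n) (φ σ : (Fin m → ℝ) → Fin n → ℝ) (x : Fin m → ℝ)
    (α : Fin n) : ℝ :=
  Aop P φ (σ x) (fun i ϑ => pd i (fun z => σ z ϑ) x) x α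

/-- Components of the tension field `τ^α(φ) = -Δφ^α + g^{ij} Γ^α_{ϑβ} φ_i^ϑ φ_j^β`. -/
def tension (P : ChartData m n) (φ : (Fin m → ℝ) → Fin n → ℝ) (x : Fin m → ℝ)
    (α : Fin n) : ℝ :=
  -(lap P (fun z => φ z α) x)
    + ∑ i, ∑ j, ∑ ϑ, ∑ β,
        P.ginv x i j * P.ΓN (φ x) α ϑ β * dphi φ x i ϑ * dphi φ x j β

/-- The components `u_j` of `Δ̄^j τ(φ)`: `u_0 = τ(φ)` and
`u_{j+1} = Δ u_j + A(u_j, ∂u_j)` (local expression of the rough Laplacian). -/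
def uvar (P : ChartData m n) (φ : (Fin m → ℝ) → Fin n → ℝ) :
    ℕ → (Fin m → ℝ) → Fin n → ℝ
  | 0 => tension P φ
  | j+1 => fun x α => lap P (fun z => uvar P φ j z α) x + Asec P φ (uvar P φ j) x α

/-- `v_j = du_j`, i.e. `v_{j i}^α = ∂u_j^α/∂x^i`. -/
def vvar (P : ChartData m n) (φ : (Fin m → ℝ) → Fin n → ℝ) (j : ℕ) (x : Fin m → ℝ)
    (i : Fin m) (α : Fin n) : ℝ :=
  pd i (fun z => uvar P φ j z α) x

/-- Components of the pull-back covariant derivative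
`(∇̄_{∂_i} σ)^γ = ∂σ^γ/∂x^i + Γ^γ_{βδ}(φ) φ_i^β σ^δ`. -/
def covD (P : ChartData m n) (φ σ : (Fin m → ℝ) → Fin n → ℝ) (i : Fin m)
    (x : Fin m → ℝ) (γ : Fin n) : ℝ :=
  pd i (fun z => σ z γ) x + ∑ β, ∑ δ, P.ΓN (φ x) γ β δ * dphi φ x i β * σ x δ

/-- `(Tr_g R^N(X, dφ(·))dφ(·))^α`. -/
def trRphi (P : ChartData m n) (φ X : (Fin m → ℝ) → Fin n → ℝ) (x : Fin m → ℝ)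
    (α : Fin n) : ℝ :=
  ∑ i, ∑ j, ∑ β, ∑ γ, ∑ δ,
    P.ginv x i j * Rc P (φ x) α δ β γ * X x β * dphi φ x i γ * dphi φ x j δ

/-- `(Tr_g R^N(dφ(·), X)dφ(·))^α`. -/
def trRphi2 (P : ChartData m n) (φ X : (Fin m → ℝ) → Fin n → ℝ) (x : Fin m → ℝ)
    (α : Fin n) : ℝ :=
  ∑ i, ∑ j, ∑ β, ∑ γ, ∑ δ,
    P.ginv x i j * Rc P (φ x) α δ β γ * dphi φ x i β * X x γ * dphi φ x j δ

/-- `(Tr_g R^N(∇̄_{(·)}W, Z)dφ(·))^α`. -/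
def trRD (P : ChartData m n) (φ W Z : (Fin m → ℝ) → Fin n → ℝ) (x : Fin m → ℝ)
    (α : Fin n) : ℝ :=
  ∑ i, ∑ j, ∑ β, ∑ γ, ∑ δ,
    P.ginv x i j * Rc P (φ x) α δ β γ * covD P φ W i x β * Z x γ * dphi φ x j δ

/-- `(Tr_g R^N(W, ∇̄_{(·)}Z)dφ(·))^α`. -/
def trRD2 (P : ChartData m n) (φ W Z : (Fin m → ℝ) → Fin n → ℝ) (x : Fin m → ℝ)
    (α : Fin n) : ℝ :=
  ∑ i, ∑ j, ∑ β, ∑ γ, ∑ δ,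
    P.ginv x i j * Rc P (φ x) α δ β γ * W x β * covD P φ Z i x γ * dphi φ x j δ

/-- Local components of Maeta's `k`-tension field `τ_k(φ)`, for `k = 2s`:
`τ_{2s}(φ) = Δ̄^{2s-1}τ(φ) - R^N(Δ̄^{2s-2}τ(φ), dφ(e_j))dφ(e_j)
  - Σ_{ℓ=1}^{s-1}( R^N(∇̄_{e_j}Δ̄^{s+ℓ-2}τ(φ), Δ̄^{s-ℓ-1}τ(φ))dφ(e_j)
                 - R^N(Δ̄^{s+ℓ-2}τ(φ), ∇̄_{e_j}Δ̄^{s-ℓ-1}τ(φ))dφ(e_j) )`,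
and for `k = 2s+1`:
`τ_{2s+1}(φ) = Δ̄^{2s}τ(φ) - R^N(Δ̄^{2s-1}τ(φ), dφ(e_j))dφ(e_j)
  - Σ_{ℓ=1}^{s-1}( R^N(∇̄_{e_j}Δ̄^{s+ℓ-1}τ(φ), Δ̄^{s-ℓ-1}τ(φ))dφ(e_j)
                 - R^N(Δ̄^{s+ℓ-1}τ(φ), ∇̄_{e_j}Δ̄^{s-ℓ-1}τ(φ))dφ(e_j) )
  - R^N(∇̄_{e_j}Δ̄^{s-1}τ(φ), Δ̄^{s-1}τ(φ))dφ(e_j)`. -/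
def tauK (P : ChartData m n) (φ : (Fin m → ℝ) → Fin n → ℝ) (k : ℕ) (x : Fin m → ℝ)
    (α : Fin n) : ℝ :=
  if Even k then
    uvar P φ (k-1) x α - trRphi P φ (uvar P φ (k-2)) x α
      - ∑ ℓ ∈ Finset.Icc 1 (k/2 - 1),
          (trRD P φ (uvar P φ (k/2 + ℓ - 2)) (uvar P φ (k/2 - ℓ - 1)) x α
            - trRD2 P φ (uvar P φ (k/2 + ℓ - 2)) (uvar P φ (k/2 - ℓ - 1)) x α)
  else
    uvar P φ (k-1) x α - trRphi P φ (uvar P φ (k-2)) x α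
      - (∑ ℓ ∈ Finset.Icc 1 (k/2 - 1),
          (trRD P φ (uvar P φ (k/2 + ℓ - 1)) (uvar P φ (k/2 - ℓ - 1)) x α
            - trRD2 P φ (uvar P φ (k/2 + ℓ - 1)) (uvar P φ (k/2 - ℓ - 1)) x α))
      - trRD P φ (uvar P φ (k/2 - 1)) (uvar P φ (k/2 - 1)) x α

/-- Components `(∇dφ)(∂_i,∂_j)^α` of the second fundamental form of `φ`. -/
def sff (P : ChartData m n) (φ : (Fin m → ℝ) → Fin n → ℝ) (x : Fin m → ℝ)
    (i j : Fin m) (α : Fin n) : ℝ :=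
  pd i (fun z => dphi φ z j α) x - (∑ k, P.ΓM x k i j * dphi φ x k α)
    + ∑ β, ∑ γ, P.ΓN (φ x) α β γ * dphi φ x i β * dphi φ x j γ


/-! ### Helper lemmas on partial derivatives -/

section PDCalculus

variable {d e : ℕ}

/-- Abbreviation for smooth (C^∞) functions. -/
abbrev SM {E F : Type*} [NormedAddCommGroup E] [NormedSpace ℝ E]
    [NormedAddCommGroup F] [NormedSpace ℝ F] (f : E → F) : Prop :=
  ContDiff ℝ (⊤ : ℕ∞) f

lemma SM.dAt {E F : Type*} [NormedAddCommGroup E] [NormedSpace ℝ E]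
    [NormedAddCommGroup F] [NormedSpace ℝ F] {f : E → F} (hf : SM f) (x : E) :
    DifferentiableAt ℝ f x :=
  (hf.differentiable (by simp)).differentiableAt

lemma SM.pd {f : (Fin d → ℝ) → ℝ} (hf : SM f) (i : Fin d) : SM (pd i f) :=
  (hf.fderiv_right (by simp)).clm_apply contDiff_const

lemma pd_add {f g : (Fin d → ℝ) → ℝ} {x : Fin d → ℝ} (i : Fin d)
    (hf : DifferentiableAt ℝ f x) (hg : DifferentiableAt ℝ g x) :
    pd i (fun z => f z + g z) x = pd i f x + pd i g x := by
  unfold pd; rw [fderiv_fun_add hf hg]; simp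

lemma pd_sub {f g : (Fin d → ℝ) → ℝ} {x : Fin d → ℝ} (i : Fin d)
    (hf : DifferentiableAt ℝ f x) (hg : DifferentiableAt ℝ g x) :
    pd i (fun z => f z - g z) x = pd i f x - pd i g x := by
  unfold pd; rw [fderiv_fun_sub hf hg]; simp

lemma pd_mul {f g : (Fin d → ℝ) → ℝ} {x : Fin d → ℝ} (i : Fin d)
    (hf : DifferentiableAt ℝ f x) (hg : DifferentiableAt ℝ g x) :
    pd i (fun z => f z * g z) x = pd i f x * g x + f x * pd i g x := by
  unfold pd; rw [fderiv_fun_mul hf hg]; simp; ring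

lemma pd_mul3 {a b c : (Fin d → ℝ) → ℝ} {x : Fin d → ℝ} (i : Fin d)
    (ha : DifferentiableAt ℝ a x) (hb : DifferentiableAt ℝ b x)
    (hc : DifferentiableAt ℝ c x) :
    pd i (fun z => a z * b z * c z) x
      = pd i a x * b x * c x + a x * pd i b x * c x + a x * b x * pd i c x := by
  rw [pd_mul i (ha.fun_mul hb) hc, pd_mul i ha hb]; ring

lemma pd_mul4 {a b c f : (Fin d → ℝ) → ℝ} {x : Fin d → ℝ} (i : Fin d)
    (ha : DifferentiableAt ℝ a x) (hb : DifferentiableAt ℝ b x)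
    (hc : DifferentiableAt ℝ c x) (hf : DifferentiableAt ℝ f x) :
    pd i (fun z => a z * b z * c z * f z) x
      = pd i a x * b x * c x * f x + a x * pd i b x * c x * f x
        + a x * b x * pd i c x * f x + a x * b x * c x * pd i f x := by
  rw [pd_mul i ((ha.fun_mul hb).fun_mul hc) hf, pd_mul3 i ha hb hc]; ring

lemma pd_sum {ι : Type*} {s : Finset ι} {F : ι → (Fin d → ℝ) → ℝ} {x : Fin d → ℝ} (i : Fin d)
    (hF : ∀ j ∈ s, DifferentiableAt ℝ (F j) x) :
    pd i (fun z => ∑ j ∈ s, F j z) x = ∑ j ∈ s, pd i (F j) x := by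
  unfold pd; rw [fderiv_fun_sum hF]; simp

lemma pd_sum2 {ι κ : Type*} [Fintype ι] [Fintype κ] {F : ι → κ → (Fin d → ℝ) → ℝ}
    {x : Fin d → ℝ} (i0 : Fin d)
    (hF : ∀ a b, DifferentiableAt ℝ (F a b) x) :
    pd i0 (fun z => ∑ a, ∑ b, F a b z) x = ∑ a, ∑ b, pd i0 (F a b) x := by
  rw [pd_sum i0 (fun a _ => DifferentiableAt.fun_sum fun b _ => hF a b)]
  exact Finset.sum_congr rfl fun a _ => pd_sum i0 fun b _ => hF a b

lemma pd_sum3 {ι κ ν : Type*} [Fintype ι] [Fintype κ] [Fintype ν]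
    {F : ι → κ → ν → (Fin d → ℝ) → ℝ} {x : Fin d → ℝ} (i0 : Fin d)
    (hF : ∀ a b c, DifferentiableAt ℝ (F a b c) x) :
    pd i0 (fun z => ∑ a, ∑ b, ∑ c, F a b c z) x = ∑ a, ∑ b, ∑ c, pd i0 (F a b c) x := by
  rw [pd_sum2 i0 (fun a b => DifferentiableAt.fun_sum fun c _ => hF a b c)]
  exact Finset.sum_congr rfl fun a _ => Finset.sum_congr rfl fun b _ =>
    pd_sum i0 fun c _ => hF a b c

lemma pd_sum4 {ι κ ν ρ : Type*} [Fintype ι] [Fintype κ] [Fintype ν] [Fintype ρ]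
    {F : ι → κ → ν → ρ → (Fin d → ℝ) → ℝ} {x : Fin d → ℝ} (i0 : Fin d)
    (hF : ∀ a b c e', DifferentiableAt ℝ (F a b c e') x) :
    pd i0 (fun z => ∑ a, ∑ b, ∑ c, ∑ e', F a b c e' z) x
      = ∑ a, ∑ b, ∑ c, ∑ e', pd i0 (F a b c e') x := by
  rw [pd_sum3 i0 (fun a b c => DifferentiableAt.fun_sum fun e' _ => hF a b c e')]
  exact Finset.sum_congr rfl fun a _ => Finset.sum_congr rfl fun b _ =>
    Finset.sum_congr rfl fun c _ => pd_sum i0 fun e' _ => hF a b c e'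

lemma clm_apply_eq_sum (L : (Fin e → ℝ) →L[ℝ] ℝ) (v : Fin e → ℝ) :
    L v = ∑ μ, v μ * L (Pi.single μ 1) := by
  have hv : v = ∑ μ, v μ • (Pi.single μ 1 : Fin e → ℝ) := by
    ext j
    simp [Pi.single_apply, Finset.sum_ite_eq']
  conv_lhs => rw [hv]
  rw [map_sum]
  simp [smul_eq_mul]

lemma fderiv_pi_apply {φ : (Fin d → ℝ) → Fin e → ℝ} {x v : Fin d → ℝ} (μ : Fin e)
    (hφ : DifferentiableAt ℝ φ x) :
    fderiv ℝ (fun z => φ z μ) x v = fderiv ℝ φ x v μ := by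
  have h1 : HasFDerivAt (fun z => φ z μ)
      ((ContinuousLinearMap.proj (R := ℝ) (φ := fun _ : Fin e => ℝ) μ).comp (fderiv ℝ φ x)) x :=
    ((ContinuousLinearMap.proj (R := ℝ) (φ := fun _ : Fin e => ℝ) μ)).hasFDerivAt.comp x
      hφ.hasFDerivAt
  rw [h1.fderiv]; rfl

lemma pd_comp {h : (Fin e → ℝ) → ℝ} {φ : (Fin d → ℝ) → Fin e → ℝ} {x : Fin d → ℝ}
    (i : Fin d) (hh : SM h) (hφ : SM φ) :
    pd i (fun z => h (φ z)) x = ∑ μ, pd μ h (φ x) * pd i (fun z => φ z μ) x := by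
  unfold pd
  have hcc : (fun z => h (φ z)) = h ∘ φ := rfl
  rw [hcc, fderiv_comp x (hh.dAt (φ x)) (hφ.dAt x), ContinuousLinearMap.comp_apply,
    clm_apply_eq_sum (fderiv ℝ h (φ x)) (fderiv ℝ φ x (Pi.single i 1))]
  refine Finset.sum_congr rfl fun μ _ => ?_
  rw [mul_comm, fderiv_pi_apply μ (hφ.dAt x)]

lemma pd_comm {f : (Fin d → ℝ) → ℝ} (hf : SM f) (i j : Fin d) (x : Fin d → ℝ) :
    pd i (pd j f) x = pd j (pd i f) x := by
  have hd : DifferentiableAt ℝ (fderiv ℝ f) x :=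
    (((hf.fderiv_right (m := (⊤:ℕ∞)) (by simp)).differentiable (by simp))).differentiableAt
  have key : ∀ a b : Fin d,
      pd a (pd b f) x = fderiv ℝ (fderiv ℝ f) x (Pi.single a 1) (Pi.single b 1) := by
    intro a b
    show fderiv ℝ (fun z => fderiv ℝ f z (Pi.single b 1)) x (Pi.single a 1) = _
    rw [fderiv_clm_apply hd (differentiableAt_const _)]
    simp
  rw [key i j, key j i]
  exact second_derivative_symmetric (f' := fderiv ℝ f)
    (fun y => ((hf.differentiable (by simp)).differentiableAt).hasFDerivAt)
    hd.hasFDerivAt _ _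

end PDCalculus

/-! ### The key identity -/

section Identity

variable (P : ChartData m n)

/-- Second partial derivatives of `φ` expressed through the second fundamental form. -/
def Tfun (x : Fin m → ℝ) (y : Fin n → ℝ) (p : Fin m → Fin n → ℝ)
    (S : Fin m → Fin m → Fin n → ℝ) (i j : Fin m) (α : Fin n) : ℝ :=
  S i j α + (∑ l, P.ΓM x l i j * p l α) - ∑ β, ∑ γ, P.ΓN y α β γ * p i β * p j γ

/-- The error term in the Weitzenböck-type identity for `Δ(dφ)`. -/
def Efun (x : Fin m → ℝ) (y : Fin n → ℝ) (p : Fin m → Fin n → ℝ)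
    (S : Fin m → Fin m → Fin n → ℝ) (k : Fin m) (α : Fin n) : ℝ :=
  (∑ i, ∑ j, pd k (fun z => P.ginv z i j) x * Tfun P x y p S i j α)
  - (∑ i, ∑ j, ∑ l,
      (pd k (fun z => P.ginv z i j) x * P.ΓM x l i j
        + P.ginv x i j * pd k (fun z => P.ΓM z l i j) x) * p l α)
  + ∑ i, ∑ j, ∑ ϑ, ∑ β,
      (pd k (fun z => P.ginv z i j) x * P.ΓN y α ϑ β * p i ϑ * p j β
      + P.ginv x i j * (∑ μ, pd μ (fun w => P.ΓN w α ϑ β) y * p k μ) * p i ϑ * p j β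
      + P.ginv x i j * P.ΓN y α ϑ β
          * (Tfun P x y p S k i ϑ * p j β + p i ϑ * Tfun P x y p S k j β))

variable {P}

lemma D2_eq_T (φ : (Fin m → ℝ) → Fin n → ℝ) (x : Fin m → ℝ) (i j : Fin m) (α : Fin n) :
    pd i (pd j (fun w => φ w α)) x = Tfun P x (φ x) (dphi φ x) (sff P φ x) i j α := by
  simp only [Tfun, sff, dphi]
  ring

lemma lap_dphi_add_vvar (hPdom : P.SmoothDomain) (hPtar : P.SmoothTarget)
    (φ : (Fin m → ℝ) → Fin n → ℝ) (hφ : ContDiff ℝ (⊤ : ℕ∞) φ)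
    (x : Fin m → ℝ) (k : Fin m) (α : Fin n) :
    lap P (fun z => dphi φ z k α) x + vvar P φ 0 x k α
      = Efun P x (φ x) (dphi φ x) (sff P φ x) k α := by
  have hφc : ∀ β, SM (fun z => φ z β) := fun β => contDiff_pi.mp hφ β
  have hD1 : ∀ (j : Fin m) (β : Fin n), SM (pd j (fun w => φ w β)) :=
    fun j β => (hφc β).pd j
  have hD2 : ∀ (i j : Fin m) (β : Fin n), SM (pd i (pd j (fun w => φ w β))) :=
    fun i j β => (hD1 j β).pd i
  have hg : ∀ i j, SM (fun z => P.ginv z i j) := hPdom.1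
  have hM : ∀ l i j, SM (fun z => P.ΓM z l i j) := fun l i j => hPdom.2 l i j
  have hN : ∀ α ϑ β, SM (fun z : Fin n → ℝ => P.ΓN z α ϑ β) := hPtar
  have hNφ : ∀ α ϑ β, SM (fun z => P.ΓN (φ z) α ϑ β) :=
    fun α ϑ β => (hPtar α ϑ β).comp hφ
  -- expanded tension
  have htension : (fun z => tension P φ z α)
      = fun z => (∑ i, ∑ j, P.ginv z i j * pd i (pd j (fun w => φ w α)) z)
        - (∑ i, ∑ j, ∑ l, P.ginv z i j * P.ΓM z l i j * pd l (fun w => φ w α) z)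
        + ∑ i, ∑ j, ∑ ϑ, ∑ β, P.ginv z i j * P.ΓN (φ z) α ϑ β
            * pd i (fun w => φ w ϑ) z * pd j (fun w => φ w β) z := by
    funext z
    simp only [tension, lap, dphi]
    ring
  -- the three pieces of ∂ₖ tension
  have hA : pd k (fun z => ∑ i, ∑ j, P.ginv z i j * pd i (pd j (fun w => φ w α)) z) x
      = (∑ i, ∑ j, pd k (fun z => P.ginv z i j) x
            * Tfun P x (φ x) (dphi φ x) (sff P φ x) i j α)
        + ∑ i, ∑ j, P.ginv x i j * pd k (pd i (pd j (fun w => φ w α))) x := by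
    rw [pd_sum2 k (fun i j => SM.dAt ((hg i j).mul (hD2 i j α)) x)]
    rw [← Finset.sum_add_distrib]
    refine Finset.sum_congr rfl fun i _ => ?_
    rw [← Finset.sum_add_distrib]
    refine Finset.sum_congr rfl fun j _ => ?_
    rw [pd_mul k ((hg i j).dAt x) ((hD2 i j α).dAt x), D2_eq_T]
  have hB : pd k (fun z => ∑ i, ∑ j, ∑ l,
        P.ginv z i j * P.ΓM z l i j * pd l (fun w => φ w α) z) x
      = (∑ i, ∑ j, ∑ l,
          (pd k (fun z => P.ginv z i j) x * P.ΓM x l i j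
            + P.ginv x i j * pd k (fun z => P.ΓM z l i j) x) * dphi φ x l α)
        + ∑ i, ∑ j, ∑ l, P.ginv x i j * P.ΓM x l i j
            * Tfun P x (φ x) (dphi φ x) (sff P φ x) k l α := by
    rw [pd_sum3 k (fun i j l => SM.dAt (((hg i j).mul (hM l i j)).mul (hD1 l α)) x)]
    rw [← Finset.sum_add_distrib]
    refine Finset.sum_congr rfl fun i _ => ?_
    rw [← Finset.sum_add_distrib]
    refine Finset.sum_congr rfl fun j _ => ?_
    rw [← Finset.sum_add_distrib]
    refine Finset.sum_congr rfl fun l _ => ?_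
    rw [pd_mul3 k ((hg i j).dAt x) ((hM l i j).dAt x) ((hD1 l α).dAt x)]
    rw [D2_eq_T φ x k l α]
    simp only [dphi]
    ring
  have hQ : pd k (fun z => ∑ i, ∑ j, ∑ ϑ, ∑ β, P.ginv z i j * P.ΓN (φ z) α ϑ β
        * pd i (fun w => φ w ϑ) z * pd j (fun w => φ w β) z) x
      = ∑ i, ∑ j, ∑ ϑ, ∑ β,
          (pd k (fun z => P.ginv z i j) x * P.ΓN (φ x) α ϑ β * dphi φ x i ϑ * dphi φ x j β
          + P.ginv x i j * (∑ μ, pd μ (fun w => P.ΓN w α ϑ β) (φ x) * dphi φ x k μ)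
              * dphi φ x i ϑ * dphi φ x j β
          + P.ginv x i j * P.ΓN (φ x) α ϑ β
              * (Tfun P x (φ x) (dphi φ x) (sff P φ x) k i ϑ * dphi φ x j β
                + dphi φ x i ϑ * Tfun P x (φ x) (dphi φ x) (sff P φ x) k j β)) := by
    rw [pd_sum4 k (fun i j ϑ β =>
      SM.dAt ((((hg i j).mul (hNφ α ϑ β)).mul (hD1 i ϑ)).mul (hD1 j β)) x)]
    refine Finset.sum_congr rfl fun i _ => Finset.sum_congr rfl fun j _ =>
      Finset.sum_congr rfl fun ϑ _ => Finset.sum_congr rfl fun β _ => ?_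
    rw [pd_mul4 k ((hg i j).dAt x) ((hNφ α ϑ β).dAt x) ((hD1 i ϑ).dAt x) ((hD1 j β).dAt x)]
    rw [pd_comp k (hN α ϑ β) hφ]
    rw [D2_eq_T φ x k i ϑ, D2_eq_T φ x k j β]
    simp only [dphi]
    ring
  -- the value of vvar
  have hv : vvar P φ 0 x k α
      = pd k (fun z => ∑ i, ∑ j, P.ginv z i j * pd i (pd j (fun w => φ w α)) z) x
        - pd k (fun z => ∑ i, ∑ j, ∑ l,
            P.ginv z i j * P.ΓM z l i j * pd l (fun w => φ w α) z) x
        + pd k (fun z => ∑ i, ∑ j, ∑ ϑ, ∑ β, P.ginv z i j * P.ΓN (φ z) α ϑ β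
            * pd i (fun w => φ w ϑ) z * pd j (fun w => φ w β) z) x := by
    have h0 : (fun z => uvar P φ 0 z α) = (fun z => tension P φ z α) := rfl
    have hAd : DifferentiableAt ℝ (fun z => ∑ i, ∑ j,
        P.ginv z i j * pd i (pd j (fun w => φ w α)) z) x :=
      DifferentiableAt.fun_sum fun i _ => DifferentiableAt.fun_sum fun j _ =>
        SM.dAt ((hg i j).mul (hD2 i j α)) x
    have hBd : DifferentiableAt ℝ (fun z => ∑ i, ∑ j, ∑ l,
        P.ginv z i j * P.ΓM z l i j * pd l (fun w => φ w α) z) x :=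
      DifferentiableAt.fun_sum fun i _ => DifferentiableAt.fun_sum fun j _ =>
        DifferentiableAt.fun_sum fun l _ => SM.dAt (((hg i j).mul (hM l i j)).mul (hD1 l α)) x
    have hQd : DifferentiableAt ℝ (fun z => ∑ i, ∑ j, ∑ ϑ, ∑ β,
        P.ginv z i j * P.ΓN (φ z) α ϑ β
          * pd i (fun w => φ w ϑ) z * pd j (fun w => φ w β) z) x :=
      DifferentiableAt.fun_sum fun i _ => DifferentiableAt.fun_sum fun j _ =>
        DifferentiableAt.fun_sum fun ϑ _ => DifferentiableAt.fun_sum fun β _ =>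
          SM.dAt ((((hg i j).mul (hNφ α ϑ β)).mul (hD1 i ϑ)).mul (hD1 j β)) x
    show pd k (fun z => uvar P φ 0 z α) x = _
    rw [h0, htension]
    rw [pd_add k (hAd.fun_sub hBd) hQd, pd_sub k hAd hBd]
  -- the value of lap (dφ)
  have hl : lap P (fun z => dphi φ z k α) x
      = -((∑ i, ∑ j, P.ginv x i j * pd k (pd i (pd j (fun w => φ w α))) x)
          - ∑ i, ∑ j, ∑ l, P.ginv x i j * P.ΓM x l i j
              * Tfun P x (φ x) (dphi φ x) (sff P φ x) k l α) := by
    simp only [lap]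
    congr 1
    congr 1
    · refine Finset.sum_congr rfl fun i _ => Finset.sum_congr rfl fun j _ => ?_
      congr 1
      have e2 : (pd j (fun z => dphi φ z k α)) = pd k (pd j (fun w => φ w α)) :=
        funext fun z => pd_comm (hφc α) j k z
      show pd i (pd j (fun z => dphi φ z k α)) x = _
      rw [e2]
      exact pd_comm (hD1 j α) i k x
    · refine Finset.sum_congr rfl fun i _ => Finset.sum_congr rfl fun j _ =>
        Finset.sum_congr rfl fun l _ => ?_
      congr 1
      show pd l (pd k (fun w => φ w α)) x = _
      rw [pd_comm (hφc α) l k x, D2_eq_T φ x k l α]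
  rw [hv, hA, hB, hQ, hl]
  simp only [Efun]
  ring

end Identity


/-! ### Smoothness of the error term in all variables -/

section SmoothE

/-- The combined variable space: base point, target point, differential, second
fundamental form. -/
abbrev Wsp (m n : ℕ) :=
  (Fin m → ℝ) × ((Fin n → ℝ) × (Fin m → Fin n → ℝ) × (Fin m → Fin m → Fin n → ℝ))

lemma efun_smooth {P : ChartData m n} (hPdom : P.SmoothDomain) (hPtar : P.SmoothTarget)
    (k : Fin m) (α : Fin n) :
    SM (fun w : Wsp m n => Efun P w.1 w.2.1 w.2.2.1 w.2.2.2 k α) := by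
  have hx : SM (fun w : Wsp m n => w.1) := contDiff_fst
  have hy : SM (fun w : Wsp m n => w.2.1) := contDiff_fst.comp contDiff_snd
  have hpw : SM (fun w : Wsp m n => w.2.2.1) :=
    (contDiff_fst.comp contDiff_snd).comp contDiff_snd
  have hSw : SM (fun w : Wsp m n => w.2.2.2) :=
    (contDiff_snd.comp contDiff_snd).comp contDiff_snd
  have hp : ∀ (i : Fin m) (β : Fin n), SM (fun w : Wsp m n => w.2.2.1 i β) := by
    intro i β
    have e1 : SM (fun q : Fin m → Fin n → ℝ => q i) := contDiff_pi.mp contDiff_id i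
    have e2 : SM (fun q : Fin m → Fin n → ℝ => q i β) := contDiff_pi.mp e1 β
    exact e2.comp hpw
  have hs : ∀ (i j : Fin m) (β : Fin n), SM (fun w : Wsp m n => w.2.2.2 i j β) := by
    intro i j β
    have e1 : SM (fun q : Fin m → Fin m → Fin n → ℝ => q i) := contDiff_pi.mp contDiff_id i
    have e2 : SM (fun q : Fin m → Fin m → Fin n → ℝ => q i j) := contDiff_pi.mp e1 j
    have e3 : SM (fun q : Fin m → Fin m → Fin n → ℝ => q i j β) := contDiff_pi.mp e2 β
    exact e3.comp hSw
  have hgx : ∀ i j, SM (fun w : Wsp m n => P.ginv w.1 i j) := fun i j =>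
    (hPdom.1 i j).comp hx
  have hgk : ∀ i j, SM (fun w : Wsp m n => pd k (fun z => P.ginv z i j) w.1) := fun i j =>
    (SM.pd (hPdom.1 i j) k).comp hx
  have hMx : ∀ l i j, SM (fun w : Wsp m n => P.ΓM w.1 l i j) := fun l i j =>
    (hPdom.2 l i j).comp hx
  have hMk : ∀ l i j, SM (fun w : Wsp m n => pd k (fun z => P.ΓM z l i j) w.1) := fun l i j =>
    (SM.pd (hPdom.2 l i j) k).comp hx
  have hNy : ∀ α' ϑ β, SM (fun w : Wsp m n => P.ΓN w.2.1 α' ϑ β) := fun α' ϑ β =>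
    (hPtar α' ϑ β).comp hy
  have hNk : ∀ (μ : Fin n) (α' ϑ β : Fin n),
      SM (fun w : Wsp m n => pd μ (fun z => P.ΓN z α' ϑ β) w.2.1) := fun μ α' ϑ β =>
    (SM.pd (hPtar α' ϑ β) μ).comp hy
  have hT : ∀ (i j : Fin m) (α' : Fin n),
      SM (fun w : Wsp m n => Tfun P w.1 w.2.1 w.2.2.1 w.2.2.2 i j α') := by
    intro i j α'
    simp only [Tfun]
    exact ((hs i j α').add (ContDiff.sum fun l _ => (hMx l i j).mul (hp l α'))).sub
      (ContDiff.sum fun β _ => ContDiff.sum fun γ _ =>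
        ((hNy α' β γ).mul (hp i β)).mul (hp j γ))
  simp only [Efun]
  refine ContDiff.add (ContDiff.sub ?_ ?_) ?_
  · exact ContDiff.sum fun i _ => ContDiff.sum fun j _ => (hgk i j).mul (hT i j α)
  · exact ContDiff.sum fun i _ => ContDiff.sum fun j _ => ContDiff.sum fun l _ =>
      (((hgk i j).mul (hMx l i j)).add ((hgx i j).mul (hMk l i j))).mul (hp l α)
  · refine ContDiff.sum fun i _ => ContDiff.sum fun j _ => ContDiff.sum fun ϑ _ =>
      ContDiff.sum fun β _ => ContDiff.add (ContDiff.add ?_ ?_) ?_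
    · exact (((hgk i j).mul (hNy α ϑ β)).mul (hp i ϑ)).mul (hp j β)
    · exact (((hgx i j).mul (ContDiff.sum fun μ _ => (hNk μ α ϑ β).mul (hp k μ))).mul
        (hp i ϑ)).mul (hp j β)
    · exact ((hgx i j).mul (hNy α ϑ β)).mul
        (((hT k i ϑ).mul (hp j β)).add ((hp i ϑ).mul (hT k j β)))

end SmoothE

/-! ### Norm lemmas -/

section Norms

lemma vnorm_nonneg {ι : Type} [Fintype ι] (f : ι → ℝ) : 0 ≤ vnorm f :=
  Real.sqrt_nonneg _

lemma abs_le_vnorm {ι : Type} [Fintype ι] (f : ι → ℝ) (i : ι) : |f i| ≤ vnorm f := by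
  rw [vnorm, ← Real.sqrt_sq_eq_abs]
  exact Real.sqrt_le_sqrt (Finset.single_le_sum (fun j _ => sq_nonneg (f j))
    (Finset.mem_univ i))

lemma vnorm_le_sum_abs {ι : Type} [Fintype ι] (f : ι → ℝ) : vnorm f ≤ ∑ i, |f i| := by
  rw [vnorm]
  have h1 : (∑ i, f i ^ 2) ≤ (∑ i, |f i|) ^ 2 := by
    have h2 : (∑ i, |f i|) ^ 2 = ∑ i, |f i| * ∑ j, |f j| := by
      rw [sq, Finset.sum_mul]
    rw [h2]
    refine Finset.sum_le_sum fun i _ => ?_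
    have h3 : f i ^ 2 = |f i| * |f i| := by
      rw [abs_mul_abs_self]; ring
    rw [h3]
    exact mul_le_mul_of_nonneg_left
      (Finset.single_le_sum (fun j _ => abs_nonneg (f j)) (Finset.mem_univ i))
      (abs_nonneg _)
  calc Real.sqrt (∑ i, f i ^ 2) ≤ Real.sqrt ((∑ i, |f i|) ^ 2) := Real.sqrt_le_sqrt h1
    _ = ∑ i, |f i| := Real.sqrt_sq (Finset.sum_nonneg fun i _ => abs_nonneg _)

end Norms

/-! ### A Lipschitz estimate for smooth functions on compact sets -/

section Lip

lemma lipschitz_aux {E₂ : Type*} [NormedAddCommGroup E₂] [NormedSpace ℝ E₂]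
    [FiniteDimensional ℝ E₂]
    {F : ((Fin m → ℝ) × E₂) → ℝ} (hF : ContDiff ℝ (⊤ : ℕ∞) F)
    {K : Set (Fin m → ℝ)} (hK : IsCompact K) (R : ℝ) :
    ∃ C > 0, ∀ x ∈ K, ∀ a ∈ Metric.closedBall (0 : E₂) R,
      ∀ b ∈ Metric.closedBall (0 : E₂) R,
        |F (x, a) - F (x, b)| ≤ C * ‖a - b‖ := by
  have hfc : Continuous (fderiv ℝ F) :=
    (hF.fderiv_right (m := (⊤ : ℕ∞)) (by simp)).continuous
  obtain ⟨C0, hC0⟩ := (hK.prod (isCompact_closedBall (0 : E₂) R)).exists_bound_of_continuousOn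
    hfc.continuousOn
  refine ⟨max C0 0 + 1, by positivity, fun x hx a ha b hb => ?_⟩
  set s := Metric.closedBall (0 : E₂) R with hs
  set L : E₂ →L[ℝ] ((Fin m → ℝ) × E₂) :=
    (0 : E₂ →L[ℝ] (Fin m → ℝ)).prod (ContinuousLinearMap.id ℝ E₂) with hL
  have hLnorm : ‖L‖ ≤ 1 := by
    refine ContinuousLinearMap.opNorm_le_bound _ zero_le_one fun v => ?_
    rw [one_mul]
    have : L v = ((0 : Fin m → ℝ), v) := rfl
    rw [this, Prod.norm_def]
    simp
  have hders : ∀ c ∈ s, HasFDerivWithinAt (fun y => F (x, y))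
      ((fderiv ℝ F (x, c)).comp L) s c := by
    intro c _
    have h1 : HasFDerivAt (fun y : E₂ => ((x, y) : (Fin m → ℝ) × E₂)) L c :=
      (hasFDerivAt_const x c).prodMk (hasFDerivAt_id c)
    exact (((hF.differentiable (by simp)) (x, c)).hasFDerivAt.comp c h1).hasFDerivWithinAt
  have hbound : ∀ c ∈ s, ‖(fderiv ℝ F (x, c)).comp L‖ ≤ max C0 0 + 1 := by
    intro c hc
    calc ‖(fderiv ℝ F (x, c)).comp L‖ ≤ ‖fderiv ℝ F (x, c)‖ * ‖L‖ :=
          ContinuousLinearMap.opNorm_comp_le _ _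
      _ ≤ C0 * 1 := mul_le_mul (hC0 (x, c) (Set.mk_mem_prod hx hc)) hLnorm
          (norm_nonneg _) ((norm_nonneg _).trans (hC0 (x, c) (Set.mk_mem_prod hx hc)))
      _ ≤ max C0 0 + 1 := by rw [mul_one]; exact (le_max_left _ _).trans (by linarith)
  have := Convex.norm_image_sub_le_of_norm_hasFDerivWithin_le hders hbound
    (convex_closedBall (0 : E₂) R) hb ha
  simpa [Real.norm_eq_abs] using this

end Lip

/-! ### lap of a difference -/

lemma lap_sub {P : ChartData m n} {f g : (Fin m → ℝ) → ℝ} (hf : SM f) (hg : SM g)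
    (x : Fin m → ℝ) :
    lap P (fun z => f z - g z) x = lap P f x - lap P g x := by
  have h1 : ∀ j : Fin m, (pd j (fun z => f z - g z)) = fun z => pd j f z - pd j g z :=
    fun j => funext fun z => pd_sub j (hf.dAt z) (hg.dAt z)
  have h2 : ∀ i j : Fin m, pd i (pd j (fun z => f z - g z)) x
      = pd i (pd j f) x - pd i (pd j g) x := by
    intro i j
    rw [h1 j]
    exact pd_sub i (SM.dAt (hf.pd j) x) (SM.dAt (hg.pd j) x)
  have h3 : ∀ l : Fin m, pd l (fun z => f z - g z) x = pd l f x - pd l g x :=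
    fun l => pd_sub l (hf.dAt x) (hg.dAt x)
  simp only [lap]
  have E1 : (∑ i, ∑ j, P.ginv x i j * pd i (fun z => pd j (fun z' => f z' - g z') z) x)
      = (∑ i, ∑ j, P.ginv x i j * pd i (pd j f) x)
        - (∑ i, ∑ j, P.ginv x i j * pd i (pd j g) x) := by
    rw [← Finset.sum_sub_distrib]
    refine Finset.sum_congr rfl fun i _ => ?_
    rw [← Finset.sum_sub_distrib]
    refine Finset.sum_congr rfl fun j _ => ?_
    rw [h2 i j]
    ring
  have E2 : (∑ i, ∑ j, ∑ l, P.ginv x i j * P.ΓM x l i j * pd l (fun z' => f z' - g z') x)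
      = (∑ i, ∑ j, ∑ l, P.ginv x i j * P.ΓM x l i j * pd l f x)
        - (∑ i, ∑ j, ∑ l, P.ginv x i j * P.ΓM x l i j * pd l g x) := by
    rw [← Finset.sum_sub_distrib]
    refine Finset.sum_congr rfl fun i _ => ?_
    rw [← Finset.sum_sub_distrib]
    refine Finset.sum_congr rfl fun j _ => ?_
    rw [← Finset.sum_sub_distrib]
    refine Finset.sum_congr rfl fun l _ => ?_
    rw [h3 l]
    ring
  rw [E1, E2]
  ring

set_option maxHeartbeats 2000000 in
/-- (Lemma 2.3 of the paper.)
For two smooth maps `φ, φ̃` in the same local charts, on any open set `D` with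
compact closure contained in the chart domain `U` there exists `C > 0` with
`|Δ(dφ - dφ̃)| ≤ C(|φ - φ̃| + |dφ - dφ̃| + |∇dφ - ∇dφ̃| + |v₀ - ṽ₀|)`,
where `Δ` acts componentwise on the `ℝ^{mn}`-valued function `(φ_i^α)`. -/
theorem estimate_laplacian_difference_of_differentials
    {m n : ℕ} (P : ChartData m n)
    (hPdom : P.SmoothDomain) (hPtar : P.SmoothTarget)
    (U : Set (Fin m → ℝ)) (hUopen : IsOpen U)
    (φ ψ : (Fin m → ℝ) → Fin n → ℝ)
    (hφ : ContDiff ℝ (⊤ : ℕ∞) φ) (hψ : ContDiff ℝ (⊤ : ℕ∞) ψ)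
    (D : Set (Fin m → ℝ)) (hDopen : IsOpen D) (hDcpt : IsCompact (closure D))
    (hDsub : closure D ⊆ U) :
    ∃ C > 0, ∀ x ∈ D,
      vnorm (fun p : Fin m × Fin n =>
          lap P (fun z => dphi φ z p.1 p.2 - dphi ψ z p.1 p.2) x)
        ≤ C * (vnorm (fun α : Fin n => φ x α - ψ x α)
          + vnorm (fun p : Fin m × Fin n => dphi φ x p.1 p.2 - dphi ψ x p.1 p.2)
          + vnorm (fun p : Fin m × Fin m × Fin n =>
              sff P φ x p.1 p.2.1 p.2.2 - sff P ψ x p.1 p.2.1 p.2.2)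
          + vnorm (fun p : Fin m × Fin n => vvar P φ 0 x p.1 p.2 - vvar P ψ 0 x p.1 p.2)) := by
  classical
  have hφc : ∀ β, SM (fun z => φ z β) := fun β => contDiff_pi.mp hφ β
  have hψc : ∀ β, SM (fun z => ψ z β) := fun β => contDiff_pi.mp hψ β
  have hdphiφ : ∀ (i : Fin m) (β : Fin n), SM (fun z => dphi φ z i β) :=
    fun i β => SM.pd (hφc β) i
  have hdphiψ : ∀ (i : Fin m) (β : Fin n), SM (fun z => dphi ψ z i β) :=
    fun i β => SM.pd (hψc β) i
  have hsffφ : ∀ (i j : Fin m) (α : Fin n), SM (fun x => sff P φ x i j α) := by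
    intro i j α
    simp only [sff]
    exact ((SM.pd (hdphiφ j α) i).sub
        (ContDiff.sum fun l _ => (hPdom.2 l i j).mul (hdphiφ l α))).add
      (ContDiff.sum fun β _ => ContDiff.sum fun γ _ =>
        (((hPtar α β γ).comp hφ).mul (hdphiφ i β)).mul (hdphiφ j γ))
  have hsffψ : ∀ (i j : Fin m) (α : Fin n), SM (fun x => sff P ψ x i j α) := by
    intro i j α
    simp only [sff]
    exact ((SM.pd (hdphiψ j α) i).sub
        (ContDiff.sum fun l _ => (hPdom.2 l i j).mul (hdphiψ l α))).add
      (ContDiff.sum fun β _ => ContDiff.sum fun γ _ =>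
        (((hPtar α β γ).comp hψ).mul (hdphiψ i β)).mul (hdphiψ j γ))
  -- bound the data maps on the compact set
  have hcontφ : ContinuousOn (fun x => ((φ x, dphi φ x, sff P φ x) :
      (Fin n → ℝ) × (Fin m → Fin n → ℝ) × (Fin m → Fin m → Fin n → ℝ))) (closure D) := by
    refine Continuous.continuousOn ?_
    refine (hφ.continuous).prodMk (Continuous.prodMk ?_ ?_)
    · exact continuous_pi fun i => continuous_pi fun β => (hdphiφ i β).continuous
    · exact continuous_pi fun i => continuous_pi fun j => continuous_pi fun α =>
        (hsffφ i j α).continuous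
  have hcontψ : ContinuousOn (fun x => ((ψ x, dphi ψ x, sff P ψ x) :
      (Fin n → ℝ) × (Fin m → Fin n → ℝ) × (Fin m → Fin m → Fin n → ℝ))) (closure D) := by
    refine Continuous.continuousOn ?_
    refine (hψ.continuous).prodMk (Continuous.prodMk ?_ ?_)
    · exact continuous_pi fun i => continuous_pi fun β => (hdphiψ i β).continuous
    · exact continuous_pi fun i => continuous_pi fun j => continuous_pi fun α =>
        (hsffψ i j α).continuous
  obtain ⟨R1, hR1⟩ := hDcpt.exists_bound_of_continuousOn hcontφ
  obtain ⟨R2, hR2⟩ := hDcpt.exists_bound_of_continuousOn hcontψ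
  have hmemφ : ∀ x ∈ closure D, ((φ x, dphi φ x, sff P φ x) :
      (Fin n → ℝ) × (Fin m → Fin n → ℝ) × (Fin m → Fin m → Fin n → ℝ))
        ∈ Metric.closedBall 0 (max R1 R2) := by
    intro x hx
    rw [mem_closedBall_zero_iff]
    exact (hR1 x hx).trans (le_max_left _ _)
  have hmemψ : ∀ x ∈ closure D, ((ψ x, dphi ψ x, sff P ψ x) :
      (Fin n → ℝ) × (Fin m → Fin n → ℝ) × (Fin m → Fin m → Fin n → ℝ))
        ∈ Metric.closedBall 0 (max R1 R2) := by
    intro x hx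
    rw [mem_closedBall_zero_iff]
    exact (hR2 x hx).trans (le_max_right _ _)
  -- per-component Lipschitz estimate for Efun
  have key : ∀ p : Fin m × Fin n, ∃ C > 0, ∀ x ∈ closure D,
      |Efun P x (φ x) (dphi φ x) (sff P φ x) p.1 p.2
        - Efun P x (ψ x) (dphi ψ x) (sff P ψ x) p.1 p.2|
      ≤ C * ‖((φ x, dphi φ x, sff P φ x) :
          (Fin n → ℝ) × (Fin m → Fin n → ℝ) × (Fin m → Fin m → Fin n → ℝ))
            - (ψ x, dphi ψ x, sff P ψ x)‖ := by
    intro p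
    obtain ⟨C, hCpos, hC⟩ := lipschitz_aux (efun_smooth hPdom hPtar p.1 p.2) hDcpt (max R1 R2)
    refine ⟨C, hCpos, fun x hx => ?_⟩
    have h := hC x hx _ (hmemφ x hx) _ (hmemψ x hx)
    exact h
  choose Cf hCfpos hCf using key
  refine ⟨(∑ p : Fin m × Fin n, (Cf p + 1)) + 1, ?_, fun x hx => ?_⟩
  · have hs : (0:ℝ) ≤ ∑ p : Fin m × Fin n, (Cf p + 1) :=
      Finset.sum_nonneg fun p _ => by linarith [hCfpos p]
    linarith
  have hxD : x ∈ closure D := subset_closure hx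
  set N1 := vnorm (fun α : Fin n => φ x α - ψ x α) with hN1def
  set N2 := vnorm (fun p : Fin m × Fin n => dphi φ x p.1 p.2 - dphi ψ x p.1 p.2) with hN2def
  set N3 := vnorm (fun p : Fin m × Fin m × Fin n =>
    sff P φ x p.1 p.2.1 p.2.2 - sff P ψ x p.1 p.2.1 p.2.2) with hN3def
  set N4 := vnorm (fun p : Fin m × Fin n =>
    vvar P φ 0 x p.1 p.2 - vvar P ψ 0 x p.1 p.2) with hN4def
  have hN1 : 0 ≤ N1 := vnorm_nonneg _
  have hN2 : 0 ≤ N2 := vnorm_nonneg _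
  have hN3 : 0 ≤ N3 := vnorm_nonneg _
  have hN4 : 0 ≤ N4 := vnorm_nonneg _
  have hnorm : ‖((φ x, dphi φ x, sff P φ x) :
      (Fin n → ℝ) × (Fin m → Fin n → ℝ) × (Fin m → Fin m → Fin n → ℝ))
        - (ψ x, dphi ψ x, sff P ψ x)‖ ≤ N1 + N2 + N3 := by
    rw [Prod.mk_sub_mk, Prod.mk_sub_mk, Prod.norm_def, Prod.norm_def]
    refine max_le ?_ (max_le ?_ ?_)
    · refine le_trans ?_ (by linarith : N1 ≤ N1 + N2 + N3)
      refine (pi_norm_le_iff_of_nonneg hN1).2 fun α => ?_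
      rw [hN1def]
      simpa [Real.norm_eq_abs] using abs_le_vnorm (fun α : Fin n => φ x α - ψ x α) α
    · refine le_trans ?_ (by linarith : N2 ≤ N1 + N2 + N3)
      refine (pi_norm_le_iff_of_nonneg hN2).2 fun i => ?_
      refine (pi_norm_le_iff_of_nonneg hN2).2 fun β => ?_
      rw [hN2def]
      simpa [Real.norm_eq_abs] using abs_le_vnorm
        (fun p : Fin m × Fin n => dphi φ x p.1 p.2 - dphi ψ x p.1 p.2) (i, β)
    · refine le_trans ?_ (by linarith : N3 ≤ N1 + N2 + N3)
      refine (pi_norm_le_iff_of_nonneg hN3).2 fun i => ?_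
      refine (pi_norm_le_iff_of_nonneg hN3).2 fun j => ?_
      refine (pi_norm_le_iff_of_nonneg hN3).2 fun α => ?_
      rw [hN3def]
      simpa [Real.norm_eq_abs] using abs_le_vnorm
        (fun p : Fin m × Fin m × Fin n =>
          sff P φ x p.1 p.2.1 p.2.2 - sff P ψ x p.1 p.2.1 p.2.2) (i, j, α)
  have hcomp : ∀ p : Fin m × Fin n,
      |lap P (fun z => dphi φ z p.1 p.2 - dphi ψ z p.1 p.2) x|
        ≤ (Cf p + 1) * (N1 + N2 + N3 + N4) := by
    intro p
    have hid : lap P (fun z => dphi φ z p.1 p.2 - dphi ψ z p.1 p.2) x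
        = (Efun P x (φ x) (dphi φ x) (sff P φ x) p.1 p.2
            - Efun P x (ψ x) (dphi ψ x) (sff P ψ x) p.1 p.2)
          - (vvar P φ 0 x p.1 p.2 - vvar P ψ 0 x p.1 p.2) := by
      rw [lap_sub (hdphiφ p.1 p.2) (hdphiψ p.1 p.2) x]
      have i1 := lap_dphi_add_vvar hPdom hPtar φ hφ x p.1 p.2
      have i2 := lap_dphi_add_vvar hPdom hPtar ψ hψ x p.1 p.2
      linarith
    rw [hid]
    have h4 : |vvar P φ 0 x p.1 p.2 - vvar P ψ 0 x p.1 p.2| ≤ N4 := by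
      rw [hN4def]
      exact abs_le_vnorm (fun p : Fin m × Fin n =>
        vvar P φ 0 x p.1 p.2 - vvar P ψ 0 x p.1 p.2) p
    have hE : |Efun P x (φ x) (dphi φ x) (sff P φ x) p.1 p.2
        - Efun P x (ψ x) (dphi ψ x) (sff P ψ x) p.1 p.2| ≤ Cf p * (N1 + N2 + N3) := by
      refine (hCf p x hxD).trans ?_
      exact mul_le_mul_of_nonneg_left hnorm (le_of_lt (hCfpos p))
    calc |(Efun P x (φ x) (dphi φ x) (sff P φ x) p.1 p.2
            - Efun P x (ψ x) (dphi ψ x) (sff P ψ x) p.1 p.2)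
          - (vvar P φ 0 x p.1 p.2 - vvar P ψ 0 x p.1 p.2)|
        ≤ |Efun P x (φ x) (dphi φ x) (sff P φ x) p.1 p.2
            - Efun P x (ψ x) (dphi ψ x) (sff P ψ x) p.1 p.2|
          + |vvar P φ 0 x p.1 p.2 - vvar P ψ 0 x p.1 p.2| := abs_sub _ _
      _ ≤ Cf p * (N1 + N2 + N3) + N4 := add_le_add hE h4
      _ ≤ (Cf p + 1) * (N1 + N2 + N3 + N4) := by nlinarith [hCfpos p]
  calc vnorm (fun p : Fin m × Fin n =>
        lap P (fun z => dphi φ z p.1 p.2 - dphi ψ z p.1 p.2) x)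
      ≤ ∑ p : Fin m × Fin n, |lap P (fun z => dphi φ z p.1 p.2 - dphi ψ z p.1 p.2) x| :=
        vnorm_le_sum_abs _
    _ ≤ ∑ p : Fin m × Fin n, (Cf p + 1) * (N1 + N2 + N3 + N4) :=
        Finset.sum_le_sum fun p _ => hcomp p
    _ = (∑ p : Fin m × Fin n, (Cf p + 1)) * (N1 + N2 + N3 + N4) := by
        rw [Finset.sum_mul]
    _ ≤ ((∑ p : Fin m × Fin n, (Cf p + 1)) + 1) * (N1 + N2 + N3 + N4) := by
        have hs : (0:ℝ) ≤ N1 + N2 + N3 + N4 := by linarith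
        nlinarith


end Polyharm
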